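/- Let (Ω, 𝔽, P) be a probability space, 𝒳 a measurable space, and let X : Ω → 𝒳, Y : Ω → {e_1,…,e_K}, Y^η : Ω → {e_1,…,e_K} be measurable. Suppose there is η ∈ ℝ such that for every measurable set B ⊆ 𝒳 and all indices i ≠ j: P(X ∈ B, Y = e_j, Y^η = e_i) = η · P(X ∈ B, Y = e_j), and P(X ∈ B, Y = e_j, Y^η = e_j) = (1 − (K−1)η) · P(X ∈ B, Y = e_j). Let U be a measurable space, ℓ : U × {e_1,…,e_K} → ℝ bounded measurable and symmetric with constant C₀, and f : 𝒳 → U measurable. Then E[ℓ(f(X), Y^η)] = C₀ η + (1 − ηK) · E[ℓ(f(X), Y)]. -/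

import Mathlib

open scoped BigOperators
open MeasureTheory

lemma scale_aux' {Ω 𝒳 : Type*} [MeasurableSpace Ω] [MeasurableSpace 𝒳]
    (P : Measure Ω) [IsFiniteMeasure P] (X : Ω → 𝒳) (hX : Measurable X)
    (S T : Set Ω) (c : ℝ) (hc : 0 ≤ c)
    (h : ∀ B : Set 𝒳, MeasurableSet B →
      (P (X ⁻¹' B ∩ S)).toReal = c * (P (X ⁻¹' B ∩ T)).toReal)
    (g : 𝒳 → ℝ) (hg : Measurable g) :
    ∫ ω in S, g (X ω) ∂P = c * ∫ ω in T, g (X ω) ∂P := by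
  have hmap : Measure.map X (P.restrict S) = ENNReal.ofReal c • Measure.map X (P.restrict T) := by
    ext B hB
    rw [Measure.smul_apply, Measure.map_apply hX hB, Measure.map_apply hX hB,
      Measure.restrict_apply (hX hB), Measure.restrict_apply (hX hB), smul_eq_mul,
      ← ENNReal.ofReal_toReal (measure_ne_top P (X ⁻¹' B ∩ S)), h B hB,
      ENNReal.ofReal_mul hc, ENNReal.ofReal_toReal (measure_ne_top P (X ⁻¹' B ∩ T))]
  calc ∫ ω in S, g (X ω) ∂P = ∫ x, g x ∂(Measure.map X (P.restrict S)) :=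
        (integral_map hX.aemeasurable hg.aestronglyMeasurable).symm
    _ = ∫ x, g x ∂(ENNReal.ofReal c • Measure.map X (P.restrict T)) := by rw [hmap]
    _ = (ENNReal.ofReal c).toReal • ∫ x, g x ∂(Measure.map X (P.restrict T)) :=
        integral_smul_measure _ _
    _ = c * ∫ ω in T, g (X ω) ∂P := by
        rw [ENNReal.toReal_ofReal hc, integral_map hX.aemeasurable hg.aestronglyMeasurable,
          smul_eq_mul]

/-- Under the uniform label-noise model (a true label `e_j` is flipped to each other
label `e_i` with probability `η`, independently of the feature `X`), a bounded
measurable loss `ℓ` that is symmetric with constant `C₀` (labels identified with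
indices in `Fin K`) satisfies
`E[ℓ(f(X), Y^η)] = C₀ η + (1 − ηK) E[ℓ(f(X), Y)]`. -/
theorem noisy_expected_risk_identity
    {Ω 𝒳 U : Type*} [MeasurableSpace Ω] [MeasurableSpace 𝒳] [MeasurableSpace U]
    (P : Measure Ω) [IsProbabilityMeasure P]
    (K : ℕ) (hK : 1 ≤ K)
    (X : Ω → 𝒳) (Y : Ω → Fin K) (Yη : Ω → Fin K)
    (hX : Measurable X) (hY : Measurable Y) (hYη : Measurable Yη)
    (η : ℝ)
    (hflip : ∀ B : Set 𝒳, MeasurableSet B → ∀ i j : Fin K, i ≠ j →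
      (P {ω | X ω ∈ B ∧ Y ω = j ∧ Yη ω = i}).toReal
        = η * (P {ω | X ω ∈ B ∧ Y ω = j}).toReal)
    (hkeep : ∀ B : Set 𝒳, MeasurableSet B → ∀ j : Fin K,
      (P {ω | X ω ∈ B ∧ Y ω = j ∧ Yη ω = j}).toReal
        = (1 - ((K : ℝ) - 1) * η) * (P {ω | X ω ∈ B ∧ Y ω = j}).toReal)
    (ℓ : U → Fin K → ℝ) (C₀ : ℝ)
    (hℓmeas : ∀ j : Fin K, Measurable fun u => ℓ u j)
    (hℓbdd : ∃ M : ℝ, ∀ (u : U) (j : Fin K), |ℓ u j| ≤ M)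
    (hsym : ∀ u : U, ∑ j, ℓ u j = C₀)
    (f : 𝒳 → U) (hf : Measurable f) :
    ∫ ω, ℓ (f (X ω)) (Yη ω) ∂P
      = C₀ * η + (1 - η * K) * ∫ ω, ℓ (f (X ω)) (Y ω) ∂P := by
  classical
  set c' : ℝ := 1 - ((K : ℝ) - 1) * η with hc'def
  set E : Fin K → Set Ω := fun j => {ω | Y ω = j} with hEdef
  set S : Fin K → Fin K → Set Ω := fun i j => {ω | Y ω = j ∧ Yη ω = i} with hSdef
  have hE : ∀ j, MeasurableSet (E j) := fun j => hY (measurableSet_singleton j)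
  have hS : ∀ i j, MeasurableSet (S i j) :=
    fun i j => (hE j).inter (hYη (measurableSet_singleton i))
  have hgmeas : ∀ i, Measurable fun u : 𝒳 => ℓ (f u) i := fun i => (hℓmeas i).comp hf
  obtain ⟨M, hM⟩ := hℓbdd
  have hint : ∀ i : Fin K, Integrable (fun ω => ℓ (f (X ω)) i) P := by
    intro i
    refine (integrable_const M).mono' ((hgmeas i).comp hX).aestronglyMeasurable ?_
    exact Filter.Eventually.of_forall fun ω => by simpa using hM (f (X ω)) i
  -- total mass decomposition
  have hP1 : ∑ j, (P (E j)).toReal = 1 := by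
    have hdisj : Pairwise (Function.onFun Disjoint E) := by
      intro a b hab
      simp only [Function.onFun, Set.disjoint_left, hEdef, Set.mem_setOf_eq]
      intro ω h1 h2
      exact hab (h1 ▸ h2 ▸ rfl)
    have hunion : (⋃ j, E j) = Set.univ := by
      ext ω; simp [hEdef]
    have h1 : P (⋃ j, E j) = ∑' j, P (E j) := measure_iUnion hdisj fun j => hE j
    rw [hunion, measure_univ, tsum_fintype] at h1
    have := congrArg ENNReal.toReal h1
    rw [ENNReal.toReal_sum (fun j _ => measure_ne_top P _)] at this
    simpa using this.symm
  have hjpos : ∃ j₀, 0 < (P (E j₀)).toReal := by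
    by_contra h
    push_neg at h
    have : ∑ j, (P (E j)).toReal = 0 :=
      Finset.sum_eq_zero fun j _ => le_antisymm (h j) ENNReal.toReal_nonneg
    rw [hP1] at this; norm_num at this
  -- nonnegativity of coefficients
  have hη : ∀ i j : Fin K, i ≠ j → 0 ≤ η := by
    intro i j hij
    obtain ⟨j₀, hj₀⟩ := hjpos
    set i₀ : Fin K := if i = j₀ then j else i with hi₀def
    have hi₀ : i₀ ≠ j₀ := by
      by_cases h : i = j₀
      · simpa [hi₀def, h] using fun hjj => hij (h.trans hjj.symm)
      · simpa [hi₀def, h] using h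
    have hh := hflip Set.univ MeasurableSet.univ i₀ j₀ hi₀
    simp only [Set.mem_univ, true_and] at hh
    have hpos : 0 ≤ η * (P {ω | Y ω = j₀}).toReal := hh ▸ ENNReal.toReal_nonneg
    have : (0:ℝ) < (P {ω | Y ω = j₀}).toReal := hj₀
    nlinarith
  have hc' : 0 ≤ c' := by
    obtain ⟨j₀, hj₀⟩ := hjpos
    have hh := hkeep Set.univ MeasurableSet.univ j₀
    simp only [Set.mem_univ, true_and] at hh
    have hpos : 0 ≤ c' * (P {ω | Y ω = j₀}).toReal := hh ▸ ENNReal.toReal_nonneg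
    have : (0:ℝ) < (P {ω | Y ω = j₀}).toReal := hj₀
    nlinarith
  -- scaling of set integrals
  have hscale : ∀ i j : Fin K, ∫ ω in S i j, ℓ (f (X ω)) i ∂P
      = (if i = j then c' else η) * ∫ ω in E j, ℓ (f (X ω)) i ∂P := by
    intro i j
    by_cases hij : i = j
    · subst hij
      simp only [if_pos rfl]
      refine scale_aux' P X hX (S i i) (E i) c' hc' (fun B hB => ?_) _ (hgmeas i)
      have e1 : X ⁻¹' B ∩ S i i = {ω | X ω ∈ B ∧ Y ω = i ∧ Yη ω = i} := by
        ext ω; simp [hSdef, Set.mem_setOf_eq, and_assoc]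
      have e2 : X ⁻¹' B ∩ E i = {ω | X ω ∈ B ∧ Y ω = i} := by
        ext ω; simp [hEdef, Set.mem_setOf_eq]
      rw [e1, e2]; exact hkeep B hB i
    · simp only [if_neg hij]
      refine scale_aux' P X hX (S i j) (E j) η (hη i j hij) (fun B hB => ?_) _ (hgmeas i)
      have e1 : X ⁻¹' B ∩ S i j = {ω | X ω ∈ B ∧ Y ω = j ∧ Yη ω = i} := by
        ext ω; simp [hSdef, Set.mem_setOf_eq, and_assoc]
      have e2 : X ⁻¹' B ∩ E j = {ω | X ω ∈ B ∧ Y ω = j} := by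
        ext ω; simp [hEdef, Set.mem_setOf_eq]
      rw [e1, e2]; exact hflip B hB i j hij
  -- decomposition of the clean risk
  have hdecY : ∫ ω, ℓ (f (X ω)) (Y ω) ∂P = ∑ j, ∫ ω in E j, ℓ (f (X ω)) j ∂P := by
    have hpt : ∀ ω, ℓ (f (X ω)) (Y ω)
        = ∑ j, (E j).indicator (fun ω' => ℓ (f (X ω')) j) ω := by
      intro ω
      rw [Finset.sum_eq_single (Y ω)]
      · rw [Set.indicator_of_mem (show ω ∈ E (Y ω) from rfl)]
      · intro j _ hj
        exact Set.indicator_of_notMem (fun h => hj ((id h : Y ω = j).symm)) _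
      · intro h; exact absurd (Finset.mem_univ _) h
    calc ∫ ω, ℓ (f (X ω)) (Y ω) ∂P
        = ∫ ω, ∑ j, (E j).indicator (fun ω' => ℓ (f (X ω')) j) ω ∂P :=
          integral_congr_ae (Filter.Eventually.of_forall hpt)
      _ = ∑ j, ∫ ω, (E j).indicator (fun ω' => ℓ (f (X ω')) j) ω ∂P :=
          integral_finset_sum _ fun j _ => (hint j).indicator (hE j)
      _ = ∑ j, ∫ ω in E j, ℓ (f (X ω)) j ∂P :=
          Finset.sum_congr rfl fun j _ => integral_indicator (hE j)
  -- decomposition of the noisy risk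
  have hdecYη : ∫ ω, ℓ (f (X ω)) (Yη ω) ∂P
      = ∑ i, ∑ j, ∫ ω in S i j, ℓ (f (X ω)) i ∂P := by
    have hpt : ∀ ω, ℓ (f (X ω)) (Yη ω)
        = ∑ i, ∑ j, (S i j).indicator (fun ω' => ℓ (f (X ω')) i) ω := by
      intro ω
      have hinner : ∀ i : Fin K, ∑ j, (S i j).indicator (fun ω' => ℓ (f (X ω')) i) ω
          = if Yη ω = i then ℓ (f (X ω)) i else 0 := by
        intro i
        rw [Finset.sum_eq_single (Y ω)]
        · simp [hSdef, Set.indicator_apply]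
        · intro j _ hj
          exact Set.indicator_of_notMem (fun h => hj h.1.symm) _
        · intro h; exact absurd (Finset.mem_univ _) h
      simp [hinner, Finset.sum_ite_eq]
    calc ∫ ω, ℓ (f (X ω)) (Yη ω) ∂P
        = ∫ ω, ∑ i, ∑ j, (S i j).indicator (fun ω' => ℓ (f (X ω')) i) ω ∂P :=
          integral_congr_ae (Filter.Eventually.of_forall hpt)
      _ = ∑ i, ∫ ω, ∑ j, (S i j).indicator (fun ω' => ℓ (f (X ω')) i) ω ∂P :=
          integral_finset_sum _ fun i _ =>
            integrable_finset_sum _ fun j _ => (hint i).indicator (hS i j)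
      _ = ∑ i, ∑ j, ∫ ω, (S i j).indicator (fun ω' => ℓ (f (X ω')) i) ω ∂P :=
          Finset.sum_congr rfl fun i _ =>
            integral_finset_sum _ fun j _ => (hint i).indicator (hS i j)
      _ = ∑ i, ∑ j, ∫ ω in S i j, ℓ (f (X ω)) i ∂P :=
          Finset.sum_congr rfl fun i _ =>
            Finset.sum_congr rfl fun j _ => integral_indicator (hS i j)
  -- constant sum over each slice
  have hconst : ∀ j : Fin K, ∑ i, ∫ ω in E j, ℓ (f (X ω)) i ∂P
      = C₀ * (P (E j)).toReal := by
    intro j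
    rw [← integral_finset_sum _ fun i _ => (hint i).restrict]
    have : ∀ ω, ∑ i, ℓ (f (X ω)) i = C₀ := fun ω => hsym (f (X ω))
    rw [integral_congr_ae (Filter.Eventually.of_forall fun ω => this ω)]
    rw [setIntegral_const, smul_eq_mul, mul_comm, measureReal_def]
  -- put it together
  rw [hdecYη]
  have step1 : ∑ i, ∑ j, ∫ ω in S i j, ℓ (f (X ω)) i ∂P
      = ∑ j, ∑ i, (if i = j then c' else η) * ∫ ω in E j, ℓ (f (X ω)) i ∂P := by
    rw [Finset.sum_comm]
    exact Finset.sum_congr rfl fun j _ => Finset.sum_congr rfl fun i _ => hscale i j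
  rw [step1]
  have step2 : ∀ j : Fin K, ∑ i, (if i = j then c' else η) * ∫ ω in E j, ℓ (f (X ω)) i ∂P
      = η * (C₀ * (P (E j)).toReal) + (c' - η) * ∫ ω in E j, ℓ (f (X ω)) j ∂P := by
    intro j
    have : ∀ i : Fin K, (if i = j then c' else η) * ∫ ω in E j, ℓ (f (X ω)) i ∂P
        = η * ∫ ω in E j, ℓ (f (X ω)) i ∂P
          + (if i = j then (c' - η) * ∫ ω in E j, ℓ (f (X ω)) j ∂P else 0) := by
      intro i
      by_cases h : i = j
      · subst h; simp; ring
      · simp [h]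
    simp_rw [this]
    rw [Finset.sum_add_distrib, ← Finset.mul_sum, hconst j, Finset.sum_ite_eq' Finset.univ j,
      if_pos (Finset.mem_univ j)]
  simp_rw [step2]
  rw [Finset.sum_add_distrib, ← Finset.mul_sum, ← Finset.mul_sum, ← Finset.mul_sum, hP1,
    ← hdecY]
  push_cast
  ring
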